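/- For all n ≥ 1 and 1 ≤ i ≤ ⌊n/2⌋ - 1, one has (i+1)·γ^{(n,1)}_i ≤ γ^{(n+1,1)}_i, where γ^{(n,1)}_i counts permutations in Ŝ_{n-1} with exactly i descents. -/

import Mathlib

open scoped Classical

/-- The number of descents of a permutation of `Fin n` (positions are 0-based:
`i` is a descent if `w i > w (i+1)`). -/
def des {n : ℕ} (w : Equiv.Perm (Fin n)) : ℕ :=
  (Finset.univ.filter fun i : Fin n => ∃ h : (i : ℕ) + 1 < n, w ⟨(i : ℕ) + 1, h⟩ < w i).card

/-- `A n i j` = number of permutations `w` of `{1,…,n}` with `w(1) = j` (1-based)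
and exactly `i` descents. -/
def A (n i j : ℕ) : ℕ :=
  (Finset.univ.filter fun w : Equiv.Perm (Fin n) =>
    (∀ x : Fin n, (x : ℕ) = 0 → (w x : ℕ) + 1 = j) ∧ des w = i).card

/-- The Eulerian number: permutations of `{1,…,n}` with exactly `i` descents. -/
def Eul (n i : ℕ) : ℕ :=
  (Finset.univ.filter fun w : Equiv.Perm (Fin n) => des w = i).card

/-- Membership in `Ŝ_m`: no final descent (`w(m-1) < w(m)`, 1-based) and no
double descents (a descent is never immediately followed by a descent). -/
def ShatMem {m : ℕ} (w : Equiv.Perm (Fin m)) : Prop :=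
  (∀ i : Fin m, (i : ℕ) + 2 = m → ¬ ∃ h : (i : ℕ) + 1 < m, w ⟨(i : ℕ) + 1, h⟩ < w i) ∧
  (∀ i j : Fin m, (j : ℕ) = (i : ℕ) + 1 →
    (∃ h : (i : ℕ) + 1 < m, w ⟨(i : ℕ) + 1, h⟩ < w i) →
      ¬ ∃ h : (j : ℕ) + 1 < m, w ⟨(j : ℕ) + 1, h⟩ < w j)

namespace Stmt13Aux

variable {m : ℕ}

/-- Descent at (0-based) position `t`, stated on natural numbers. -/
def DesN (w : Equiv.Perm (Fin m)) (t : ℕ) : Prop :=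
  ∃ h : t + 1 < m, (w ⟨t + 1, h⟩ : ℕ) < w ⟨t, Nat.lt_of_succ_lt h⟩

lemma desN_iff (w : Equiv.Perm (Fin m)) (p : Fin m) :
    (∃ h : (p : ℕ) + 1 < m, w ⟨(p : ℕ) + 1, h⟩ < w p) ↔ DesN w p.1 := by
  constructor
  · rintro ⟨h, hlt⟩
    exact ⟨h, Fin.lt_def.mp hlt⟩
  · rintro ⟨h, hlt⟩
    exact ⟨h, Fin.lt_def.mpr hlt⟩

lemma des_eq (w : Equiv.Perm (Fin m)) :
    des w = (Finset.univ.filter fun p : Fin m => DesN w p.1).card := by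
  unfold des
  congr 1
  ext p
  simp only [Finset.mem_filter, Finset.mem_univ, true_and]
  exact desN_iff w p

lemma desN_lt (w : Equiv.Perm (Fin m)) {t : ℕ} (h : DesN w t) : t + 1 < m := h.1

/-- Insertion of the maximal letter of `Fin (m+1)` at position `k`. -/
def ins (w : Equiv.Perm (Fin m)) (k : Fin (m + 1)) : Equiv.Perm (Fin (m + 1)) :=
  ((finSuccEquiv' k).trans (Equiv.optionCongr w)).trans (finSuccEquiv' (Fin.last m)).symm

lemma ins_self (w : Equiv.Perm (Fin m)) (k : Fin (m + 1)) : ins w k k = Fin.last m := by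
  simp [ins, finSuccEquiv'_at, finSuccEquiv'_symm_none]

lemma ins_succAbove (w : Equiv.Perm (Fin m)) (k : Fin (m + 1)) (a : Fin m) :
    ins w k (k.succAbove a) = (w a).castSucc := by
  simp [ins, finSuccEquiv'_succAbove, finSuccEquiv'_symm_some, Fin.succAbove_last]

lemma ins_val_lt (w : Equiv.Perm (Fin m)) (k : Fin (m + 1)) {t : ℕ} (ht : t < m)
    (h : t < k.1) (h' : t < m + 1) : (ins w k ⟨t, h'⟩ : ℕ) = w ⟨t, ht⟩ := by
  have e : k.succAbove ⟨t, ht⟩ = ⟨t, h'⟩ := by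
    rw [Fin.succAbove_of_castSucc_lt]
    · rfl
    · simpa [Fin.lt_def] using h
  rw [← e, ins_succAbove]
  simp

lemma ins_val_self (w : Equiv.Perm (Fin m)) (k : Fin (m + 1)) {t : ℕ}
    (h : t = k.1) (h' : t < m + 1) : (ins w k ⟨t, h'⟩ : ℕ) = m := by
  have : (⟨t, h'⟩ : Fin (m + 1)) = k := by exact Fin.ext h
  rw [this, ins_self]
  simp

lemma ins_val_gt (w : Equiv.Perm (Fin m)) (k : Fin (m + 1)) {t : ℕ} (ht : t < m)
    (h : k.1 ≤ t) (h' : t + 1 < m + 1) : (ins w k ⟨t + 1, h'⟩ : ℕ) = w ⟨t, ht⟩ := by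
  have e : k.succAbove ⟨t, ht⟩ = ⟨t + 1, h'⟩ := by
    rw [Fin.succAbove_of_le_castSucc]
    · rfl
    · simpa [Fin.le_def] using h
  rw [← e, ins_succAbove]
  simp

lemma desN_ins (w : Equiv.Perm (Fin m)) (k : Fin (m + 1)) {t : ℕ} (ht : t < m) :
    DesN (ins w k) t ↔
      (t + 1 < k.1 ∧ DesN w t) ∨ t = k.1 ∨ (k.1 < t ∧ DesN w (t - 1)) := by
  have hk : k.1 ≤ m := Nat.lt_succ_iff.mp k.2
  rcases Nat.lt_trichotomy (t + 1) k.1 with hA | hA | hA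
  · -- t + 1 < k
    have htm : t + 1 < m := by omega
    constructor
    · rintro ⟨h, hlt⟩
      rw [ins_val_lt w k htm (by omega), ins_val_lt w k (by omega : t < m) (by omega)] at hlt
      exact Or.inl ⟨hA, htm, hlt⟩
    · rintro (⟨-, hm, hlt⟩ | h | ⟨h, -⟩)
      · refine ⟨by omega, ?_⟩
        rw [ins_val_lt w k htm (by omega), ins_val_lt w k (by omega : t < m) (by omega)]
        exact hlt
      · omega
      · omega
  · -- t + 1 = k
    constructor
    · rintro ⟨h, hlt⟩
      rw [ins_val_self w k hA, ins_val_lt w k ht (by omega)] at hlt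
      exact absurd (w ⟨t, ht⟩).2 (by omega)
    · rintro (⟨h, -⟩ | h | ⟨h, -⟩) <;> omega
  · -- k < t + 1, i.e. k ≤ t
    rcases Nat.eq_or_lt_of_le (Nat.lt_succ_iff.mp hA) with hB | hB
    · -- t = k
      constructor
      · intro _
        exact Or.inr (Or.inl hB.symm)
      · intro _
        refine ⟨by omega, ?_⟩
        rw [ins_val_self w k hB.symm, ins_val_gt w k ht (by omega)]
        exact (w ⟨t, ht⟩).2
    · -- k < t
      obtain ⟨s, rfl⟩ : ∃ s, t = s + 1 := ⟨t - 1, by omega⟩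
      have hs : s < m := by omega
      constructor
      · rintro ⟨h, hlt⟩
        rw [ins_val_gt w k ht (by omega), ins_val_gt w k hs (by omega)] at hlt
        exact Or.inr (Or.inr ⟨hB, by rw [Nat.add_sub_cancel]; exact ⟨ht, hlt⟩⟩)
      · rintro (⟨h, -⟩ | h | ⟨-, hd⟩)
        · omega
        · omega
        · obtain ⟨h, hlt⟩ := (by simpa using hd : DesN w s)
          refine ⟨by omega, ?_⟩
          rw [ins_val_gt w k ht (by omega), ins_val_gt w k hs (by omega)]
          exact hlt

/-- `k` is a valid insertion slot for `w`. -/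
def Slot (w : Equiv.Perm (Fin m)) (k : Fin (m + 1)) : Prop :=
  k.1 = m ∨ (1 ≤ k.1 ∧ DesN w (k.1 - 1))

lemma des_ins (w : Equiv.Perm (Fin m)) (k : Fin (m + 1)) (hk : Slot w k) :
    des (ins w k) = des w := by
  rw [des_eq, des_eq]
  symm
  apply Finset.card_bij
    (fun d _ => if d.1 + 1 < k.1 then (d : Fin m).castSucc else (d : Fin m).succ)
  · intro d hd
    simp only [Finset.mem_filter, Finset.mem_univ, true_and] at hd ⊢
    have hdm : d.1 + 1 < m := desN_lt w hd
    split_ifs with hc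
    · rw [desN_ins w k (by simpa using (by omega : d.1 < m))]
      exact Or.inl ⟨by simpa using hc, by simpa using hd⟩
    · rw [desN_ins w k (by simpa using hdm)]
      rcases Nat.eq_or_lt_of_le (by omega : k.1 ≤ d.1 + 1) with hB | hB
      · exact Or.inr (Or.inl (by simpa using hB.symm))
      · exact Or.inr (Or.inr ⟨by simpa using hB, by simpa using hd⟩)
  · intro d1 h1 d2 h2 heq
    have := congrArg Fin.val heq
    apply Fin.ext
    split_ifs at this with c1 c2 c2 <;> simp only [Fin.coe_castSucc, Fin.val_succ] at this <;> omega
  · intro j hj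
    simp only [Finset.mem_filter, Finset.mem_univ, true_and] at hj
    have htm : j.1 < m := by
      have := desN_lt _ hj
      omega
    rw [desN_ins w k htm] at hj
    rcases hj with ⟨hlt, hdw⟩ | he | ⟨hgt, hdw⟩
    · refine ⟨⟨j.1, htm⟩, by simpa using hdw, ?_⟩
      rw [if_pos (by simpa using hlt)]
      exact Fin.ext (by simp)
    · rcases hk with hk | ⟨hk1, hdk⟩
      · omega
      · refine ⟨⟨k.1 - 1, by omega⟩, by simpa using hdk, ?_⟩
        rw [if_neg (by simp; omega)]
        exact Fin.ext (by simp; omega)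
    · refine ⟨⟨j.1 - 1, by have := desN_lt _ hdw; omega⟩, by simpa using hdw, ?_⟩
      rw [if_neg (by simp; omega)]
      exact Fin.ext (by simp; omega)

lemma shatMem_iff (w : Equiv.Perm (Fin m)) :
    ShatMem w ↔ (∀ t : ℕ, t + 2 = m → ¬ DesN w t) ∧
      (∀ t : ℕ, DesN w t → ¬ DesN w (t + 1)) := by
  constructor
  · rintro ⟨h1, h2⟩
    constructor
    · intro t ht hd
      have htm : t < m := by omega
      exact h1 ⟨t, htm⟩ ht ((desN_iff w ⟨t, htm⟩).mpr hd)
    · intro t hd1 hd2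
      have htm : t < m := by have := desN_lt w hd1; omega
      have htm2 : t + 1 < m := desN_lt w hd1
      exact h2 ⟨t, htm⟩ ⟨t + 1, htm2⟩ rfl ((desN_iff w ⟨t, htm⟩).mpr hd1)
        ((desN_iff w ⟨t + 1, htm2⟩).mpr hd2)
  · rintro ⟨h1, h2⟩
    constructor
    · intro p hp hd
      exact h1 p.1 hp ((desN_iff w p).mp hd)
    · intro p q hpq hd1 hd2
      have := (desN_iff w q).mp hd2
      rw [hpq] at this
      exact h2 p.1 ((desN_iff w p).mp hd1) this

lemma shat_ins (w : Equiv.Perm (Fin m)) (k : Fin (m + 1)) (hw : ShatMem w)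
    (hk : Slot w k) : ShatMem (ins w k) := by
  rw [shatMem_iff] at hw ⊢
  obtain ⟨hw1, hw2⟩ := hw
  constructor
  · intro t h2 hd
    have ht : t < m := by omega
    rw [desN_ins w k ht] at hd
    rcases hd with ⟨-, hdw⟩ | he | ⟨hgt, hdw⟩
    · have := desN_lt w hdw
      omega
    · rcases hk with hk | ⟨hk1, hdk⟩
      · omega
      · exact hw1 (k.1 - 1) (by omega) hdk
    · exact hw1 (t - 1) (by omega) hdw
  · intro t hd1 hd2
    have ht : t < m := by have := desN_lt _ hd1; omega
    have ht2 : t + 1 < m := by have := desN_lt _ hd2; omega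
    rw [desN_ins w k ht] at hd1
    rw [desN_ins w k ht2] at hd2
    rcases hd1 with ⟨hA1, hdw1⟩ | hA1 | ⟨hA1, hdw1⟩ <;>
      rcases hd2 with ⟨hA2, hdw2⟩ | hA2 | ⟨hA2, hdw2⟩
    · exact hw2 t hdw1 hdw2
    · omega
    · omega
    · omega
    · omega
    · rcases hk with hk | ⟨hk1, hdk⟩
      · omega
      · have h1 : DesN w (t - 1) := by rw [hA1]; exact hdk
        have h2' : DesN w ((t - 1) + 1) := by
          have : t + 1 - 1 = (t - 1) + 1 := by omega
          rwa [this] at hdw2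
        exact hw2 (t - 1) h1 h2'
    · omega
    · omega
    · have h1 : DesN w (t - 1) := hdw1
      have h2' : DesN w ((t - 1) + 1) := by
        have : t + 1 - 1 = (t - 1) + 1 := by omega
        rwa [this] at hdw2
      exact hw2 (t - 1) h1 h2'

lemma ins_inj_k {w w' : Equiv.Perm (Fin m)} {k k' : Fin (m + 1)}
    (h : ins w k = ins w' k') : k = k' := by
  have h1 : ins w' k' k = Fin.last m := by rw [← h]; exact ins_self w k
  have h2 : ins w' k' k' = Fin.last m := ins_self w' k'
  exact (ins w' k').injective (h1.trans h2.symm)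

lemma ins_inj_w {w w' : Equiv.Perm (Fin m)} {k : Fin (m + 1)}
    (h : ins w k = ins w' k) : w = w' := by
  apply Equiv.ext
  intro a
  have h1 : ins w k (k.succAbove a) = ins w' k (k.succAbove a) := by rw [h]
  rw [ins_succAbove, ins_succAbove] at h1
  exact Fin.castSucc_injective _ h1

/-- The set of valid insertion slots. -/
noncomputable def slots (w : Equiv.Perm (Fin m)) : Finset (Fin (m + 1)) :=
  insert (Fin.last m) ((Finset.univ.filter fun p : Fin m => DesN w p.1).image Fin.succ)

lemma slot_of_mem {w : Equiv.Perm (Fin m)} {k : Fin (m + 1)} (hk : k ∈ slots w) :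
    Slot w k := by
  rcases Finset.mem_insert.mp hk with h | h
  · exact Or.inl (by rw [h]; rfl)
  · obtain ⟨p, hp, rfl⟩ := Finset.mem_image.mp h
    simp only [Finset.mem_filter, Finset.mem_univ, true_and] at hp
    exact Or.inr ⟨by simp, by simpa using hp⟩

lemma card_slots (w : Equiv.Perm (Fin m)) : (slots w).card = des w + 1 := by
  rw [slots, Finset.card_insert_of_notMem, Finset.card_image_of_injective _
    (Fin.succ_injective m), des_eq]
  intro hmem
  obtain ⟨p, hp, hlast⟩ := Finset.mem_image.mp hmem
  simp only [Finset.mem_filter, Finset.mem_univ, true_and] at hp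
  have := desN_lt w hp
  have : p.1 + 1 = m := by
    have := congrArg Fin.val hlast
    simpa using this
  omega

end Stmt13Aux

theorem stmt13 (n i : ℕ) (hn : 1 ≤ n) (hi1 : 1 ≤ i) (hi2 : i ≤ n / 2 - 1) :
    (i + 1) *
        (Finset.univ.filter fun w : Equiv.Perm (Fin (n - 1)) =>
          ShatMem w ∧ des w = i).card ≤
      (Finset.univ.filter fun w : Equiv.Perm (Fin n) =>
        ShatMem w ∧ des w = i).card := by
  obtain ⟨m, rfl⟩ : ∃ m, n = m + 1 := ⟨n - 1, by omega⟩
  classical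
  set S : Finset (Equiv.Perm (Fin m)) :=
    Finset.univ.filter fun w : Equiv.Perm (Fin m) => ShatMem w ∧ des w = i with hS
  set T : Finset (Equiv.Perm (Fin (m + 1))) :=
    Finset.univ.filter fun w : Equiv.Perm (Fin (m + 1)) => ShatMem w ∧ des w = i with hT
  have key : ∀ w ∈ S, ((Stmt13Aux.slots w).image (Stmt13Aux.ins w)).card = i + 1 := by
    intro w hw
    rw [Finset.card_image_of_injective _ (fun k k' h => Stmt13Aux.ins_inj_k h),
      Stmt13Aux.card_slots]
    simp only [hS, Finset.mem_filter] at hw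
    rw [hw.2.2]
  have hsub : (S.biUnion fun w => (Stmt13Aux.slots w).image (Stmt13Aux.ins w)) ⊆ T := by
    intro u hu
    obtain ⟨w, hw, hu⟩ := Finset.mem_biUnion.mp hu
    obtain ⟨k, hk, rfl⟩ := Finset.mem_image.mp hu
    simp only [hS, Finset.mem_filter, Finset.mem_univ, true_and] at hw
    simp only [hT, Finset.mem_filter, Finset.mem_univ, true_and]
    have hslot := Stmt13Aux.slot_of_mem hk
    exact ⟨Stmt13Aux.shat_ins w k hw.1 hslot, by rw [Stmt13Aux.des_ins w k hslot, hw.2]⟩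
  have hdisj : ∀ w1 ∈ S, ∀ w2 ∈ S, w1 ≠ w2 →
      Disjoint ((Stmt13Aux.slots w1).image (Stmt13Aux.ins w1))
        ((Stmt13Aux.slots w2).image (Stmt13Aux.ins w2)) := by
    intro w1 _ w2 _ hne
    rw [Finset.disjoint_left]
    intro u hu1 hu2
    obtain ⟨k1, _, h1⟩ := Finset.mem_image.mp hu1
    obtain ⟨k2, _, h2⟩ := Finset.mem_image.mp hu2
    have hkk : k1 = k2 := Stmt13Aux.ins_inj_k (h1.trans h2.symm)
    rw [hkk] at h1
    exact hne (Stmt13Aux.ins_inj_w (h1.trans h2.symm))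
  calc (i + 1) * S.card = ∑ w ∈ S, ((Stmt13Aux.slots w).image (Stmt13Aux.ins w)).card := by
        rw [Finset.sum_congr rfl key, Finset.sum_const, smul_eq_mul, mul_comm]
    _ = (S.biUnion fun w => (Stmt13Aux.slots w).image (Stmt13Aux.ins w)).card :=
        (Finset.card_biUnion hdisj).symm
    _ ≤ T.card := Finset.card_le_card hsub
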